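/- Let p, q ∈ ℝ with p = √(1+τ²) and q = (1/τ)√(τ²+λ₁²) for some real τ ≠ 0 and λ₁ > 0, and let α ∈ ℝ with q²cos²α > 1. Set Q = √(q²cos²α − 1). Then the 2×2 matrix M₀ = [[ (λ₁/(st))(1−s²−t²), s ], [ −s, st/λ₁ ]] with t = iτ, s = −iλ₁√((1+τ²)/(τ²+λ₁²))e^{iα}, has trace 2pq·cos α and determinant p², and its eigenvalues are ν± = p(q cos α ± Q). -/

import Mathlib

open Real Complex Matrix

lemma det_sub_smul_one_fin2 (M : Matrix (Fin 2) (Fin 2) ℂ) (ν : ℂ) :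
    (M - ν • (1 : Matrix (Fin 2) (Fin 2) ℂ)).det
      = M.det - ν * M.trace + ν ^ 2 := by
  simp [Matrix.det_fin_two, Matrix.trace_fin_two, Matrix.one_apply]
  ring

theorem M0_trace_det_eigenvalues (τ lam₁ α p q : ℝ) (hτ : τ ≠ 0)
    (hlam : 0 < lam₁)
    (hp : p = Real.sqrt (1 + τ ^ 2))
    (hq : q = (1 / τ) * Real.sqrt (τ ^ 2 + lam₁ ^ 2))
    (hcos : q ^ 2 * Real.cos α ^ 2 > 1) :
    let Q : ℝ := Real.sqrt (q ^ 2 * Real.cos α ^ 2 - 1)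
    let t : ℂ := Complex.I * τ
    let s : ℂ := -Complex.I * lam₁ *
      (Real.sqrt ((1 + τ ^ 2) / (τ ^ 2 + lam₁ ^ 2)) : ℝ) * Complex.exp (Complex.I * α)
    let M₀ : Matrix (Fin 2) (Fin 2) ℂ :=
      !![(lam₁ : ℂ) / (s * t) * (1 - s ^ 2 - t ^ 2), s; -s, s * t / (lam₁ : ℂ)]
    M₀.trace = ((2 * p * q * Real.cos α : ℝ) : ℂ) ∧
    M₀.det = ((p ^ 2 : ℝ) : ℂ) ∧
    (M₀ - ((p * (q * Real.cos α + Q) : ℝ) : ℂ) • (1 : Matrix (Fin 2) (Fin 2) ℂ)).det = 0 ∧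
    (M₀ - ((p * (q * Real.cos α - Q) : ℝ) : ℂ) • (1 : Matrix (Fin 2) (Fin 2) ℂ)).det = 0 := by
  intro Q t s M₀
  -- real abbreviations
  set a : ℝ := Real.sqrt (1 + τ ^ 2) with ha_def
  set b : ℝ := Real.sqrt (τ ^ 2 + lam₁ ^ 2) with hb_def
  have ha2 : a ^ 2 = 1 + τ ^ 2 := Real.sq_sqrt (by positivity)
  have hb2 : b ^ 2 = τ ^ 2 + lam₁ ^ 2 := Real.sq_sqrt (by positivity)
  have hapos : 0 < a := Real.sqrt_pos.2 (by positivity)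
  have hbpos : 0 < b := Real.sqrt_pos.2 (by positivity)
  have hQ2 : Q ^ 2 = q ^ 2 * Real.cos α ^ 2 - 1 := Real.sq_sqrt (by linarith)
  have hr : Real.sqrt ((1 + τ ^ 2) / (τ ^ 2 + lam₁ ^ 2)) = a / b :=
    Real.sqrt_div (by positivity) _
  -- complex abbreviations
  set e : ℂ := Complex.exp (Complex.I * α) with he_def
  have hene : e ≠ 0 := Complex.exp_ne_zero _
  have hτc : (τ : ℂ) ≠ 0 := Complex.ofReal_ne_zero.2 hτ
  have hlc : (lam₁ : ℂ) ≠ 0 := Complex.ofReal_ne_zero.2 hlam.ne'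
  have hac : (a : ℂ) ≠ 0 := Complex.ofReal_ne_zero.2 hapos.ne'
  have hbc : (b : ℂ) ≠ 0 := Complex.ofReal_ne_zero.2 hbpos.ne'
  have ha2c : (a : ℂ) ^ 2 = 1 + (τ : ℂ) ^ 2 := by exact_mod_cast congrArg (Complex.ofReal) ha2
  have hb2c : (b : ℂ) ^ 2 = (τ : ℂ) ^ 2 + (lam₁ : ℂ) ^ 2 := by
    exact_mod_cast congrArg (Complex.ofReal) hb2
  have hs : s = -Complex.I * lam₁ * ((a : ℂ) / (b : ℂ)) * e := by
    simp only [s, hr, he_def]; push_cast; ring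
  have ht : t = Complex.I * τ := rfl
  have hsne : s ≠ 0 := by
    rw [hs]
    apply mul_ne_zero (mul_ne_zero (mul_ne_zero (by simp [Complex.I_ne_zero]) hlc)
      (div_ne_zero hac hbc)) hene
  have htne : t ≠ 0 := by rw [ht]; exact mul_ne_zero Complex.I_ne_zero hτc
  -- the key relation 2 cos α * e = e^2 + 1
  have hce : 2 * Complex.cos (α : ℂ) * e = e ^ 2 + 1 := by
    rw [he_def, mul_comm Complex.I (α : ℂ), Complex.exp_mul_I]
    linear_combination Complex.sin_sq_add_cos_sq (α : ℂ) -
      Complex.sin (α : ℂ) ^ 2 * Complex.I_sq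
  have hsb : s * (b : ℂ) = -Complex.I * lam₁ * a * e := by
    rw [hs]
    field_simp
  have hst : s * t = (lam₁ : ℂ) * τ * (a : ℂ) * e / b := by
    rw [ht, eq_div_iff hbc]
    linear_combination (Complex.I * (τ : ℂ)) * hsb - ((lam₁ : ℂ) * τ * a * e) * Complex.I_sq
  have hs2 : s ^ 2 = -((lam₁ : ℂ) ^ 2 * (a : ℂ) ^ 2 * e ^ 2) / (b : ℂ) ^ 2 := by
    rw [eq_div_iff (pow_ne_zero 2 hbc)]
    linear_combination (s * (b : ℂ) + (-Complex.I * lam₁ * a * e)) * hsb +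
      ((lam₁ : ℂ) ^ 2 * (a : ℂ) ^ 2 * e ^ 2) * Complex.I_sq
  have ht2 : t ^ 2 = -(τ : ℂ) ^ 2 := by
    rw [ht]
    linear_combination (τ : ℂ) ^ 2 * Complex.I_sq
  have hM : M₀ = !![(lam₁ : ℂ) / (s * t) * (1 - s ^ 2 - t ^ 2), s;
      -s, s * t / (lam₁ : ℂ)] := rfl
  have htrace : M₀.trace = ((2 * p * q * Real.cos α : ℝ) : ℂ) := by
    rw [hM, Matrix.trace_fin_two_of]
    rw [div_mul_eq_mul_div, div_add_div _ _ (mul_ne_zero hsne htne) hlc,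
      div_eq_iff (mul_ne_zero (mul_ne_zero hsne htne) hlc)]
    rw [hst, hs2, ht2, hp, hq]
    push_cast
    field_simp [hbc]
    linear_combination (-(b:ℂ) ^ 2) * ha2c -
      ((a:ℂ) ^ 2 * e ^ 2) * hb2c -
      ((a:ℂ) ^ 2 * (b:ℂ) ^ 2) * hce
  have hdet : M₀.det = ((p ^ 2 : ℝ) : ℂ) := by
    rw [hM, Matrix.det_fin_two_of, hp]
    have h1 : (lam₁ : ℂ) / (s * t) * (1 - s ^ 2 - t ^ 2) * (s * t / (lam₁ : ℂ))
        = 1 - s ^ 2 - t ^ 2 := by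
      field_simp
    rw [h1, ht2]
    push_cast
    linear_combination - ha2c
  refine ⟨htrace, hdet, ?_, ?_⟩ <;>
  · rw [det_sub_smul_one_fin2, htrace, hdet]
    norm_cast
    linear_combination p ^ 2 * hQ2
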